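/- Let (Mₖ)_{k=0,…,T} be a nonnegative process adapted to a filtration (Fₖ) with E[M_{k+1} | Fₖ] ≤ Mₖ + c almost surely for a constant c ≥ 0, and M₀ ≤ γ almost surely. Then P{max_{0 ≤ k ≤ T} Mₖ ≥ 1} ≤ γ + c·T. -/

import Mathlib

open MeasureTheory

theorem stmt_5 {Ω : Type*} {m0 : MeasurableSpace Ω} (P : Measure Ω) [IsProbabilityMeasure P]
    (ℱ : Filtration ℕ m0) (T : ℕ)
    (M : ℕ → Ω → ℝ) (hM_adapted : Adapted ℱ M)
    (hM_int : ∀ k, Integrable (M k) P)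
    (hM_nonneg : ∀ k ω, 0 ≤ M k ω)
    (c γ : ℝ) (hc : 0 ≤ c)
    (hmart : ∀ k, ∀ᵐ ω ∂P, (P[M (k + 1) | ℱ k]) ω ≤ M k ω + c)
    (h0 : ∀ᵐ ω ∂P, M 0 ω ≤ γ) :
    P {ω | ∃ k ≤ T, 1 ≤ M k ω} ≤ ENNReal.ofReal (γ + c * T) := by
  classical
  set g : ℕ → Ω → ℝ := fun k ω => M k ω + c * ((T : ℝ) - k) with hg_def
  have hg_adapted : Adapted ℱ g := fun k =>
    (hM_adapted k).add (measurable_const)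
  have hg_int : ∀ k, Integrable (g k) P := fun k =>
    (hM_int k).add (integrable_const _)
  have hg_super : Supermartingale g ℱ P := by
    refine supermartingale_nat hg_adapted.stronglyAdapted hg_int fun k => ?_
    have hce : P[g (k + 1)|ℱ k] =ᵐ[P]
        fun ω => (P[M (k + 1)|ℱ k]) ω + c * ((T : ℝ) - ((k : ℝ) + 1)) := by
      have heq : g (k + 1) = M (k + 1) + (fun _ => c * ((T : ℝ) - ((k : ℝ) + 1))) := by
        funext ω; simp only [hg_def, Pi.add_apply]; push_cast; ring
      rw [heq]
      refine (condExp_add (hM_int _) (integrable_const _) _).trans ?_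
      rw [condExp_const (ℱ.le k)]
      rfl
    filter_upwards [hce, hmart k] with ω h1 h2
    rw [h1]
    have : (P[M (k + 1)|ℱ k]) ω + c * ((T : ℝ) - ((k : ℝ) + 1)) ≤
        (M k ω + c) + c * ((T : ℝ) - ((k : ℝ) + 1)) := by linarith
    refine this.trans ?_
    simp only [hg_def]
    ring_nf
    linarith
  set τ' : Ω → ℕ := hittingBtwn M (Set.Ici (1 : ℝ)) 0 T with hτ'_def
  set τ : Ω → WithTop ℕ := fun ω => (τ' ω : WithTop ℕ) with hτ_def
  have hτ_st : IsStoppingTime ℱ τ := hM_adapted.isStoppingTime_hittingBtwn measurableSet_Ici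
  have hτ_le : ∀ ω, τ ω ≤ T := fun ω => WithTop.coe_le_coe.mpr (hittingBtwn_le ω)
  -- optional stopping for the supermartingale g
  have hos : ∫ ω, stoppedValue g τ ω ∂P ≤ ∫ ω, g 0 ω ∂P := by
    have := hg_super.neg.expected_stoppedValue_mono (isStoppingTime_const ℱ 0) hτ_st
      (fun ω => WithTop.coe_le_coe.mpr (Nat.zero_le _)) (N := T) hτ_le
    have h1 : stoppedValue (-g) τ = fun ω => -stoppedValue g τ ω := rfl
    have h2 : stoppedValue (-g) (fun _ => WithTop.some 0) = fun ω => -(g 0 ω) := rfl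
    rw [h1, h2, integral_neg, integral_neg, neg_le_neg_iff] at this
    simpa [stoppedValue, WithTop.untopD_coe] using this
  have hg0 : ∫ ω, g 0 ω ∂P ≤ γ + c * T := by
    have : ∫ ω, g 0 ω ∂P = (∫ ω, M 0 ω ∂P) + c * (T : ℝ) := by
      have heq : g 0 = fun ω => M 0 ω + c * (T : ℝ) := by
        funext ω; simp [hg_def]
      rw [heq]
      rw [integral_add (hM_int 0) (integrable_const _)]
      simp
    rw [this]
    have hM0 : ∫ ω, M 0 ω ∂P ≤ γ := by
      calc ∫ ω, M 0 ω ∂P ≤ ∫ _, γ ∂P := integral_mono_ae (hM_int 0) (integrable_const _) h0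
        _ = γ := by simp
    linarith
  -- stopped value is ≥ 1 on the event, ≥ 0 everywhere
  set A : Set Ω := {ω | ∃ k ≤ T, 1 ≤ M k ω} with hA_def
  have hA_meas : MeasurableSet A := by
    have : A = ⋃ k ∈ Finset.range (T + 1), {ω | 1 ≤ M k ω} := by
      ext ω
      simp only [hA_def, Set.mem_setOf_eq, Set.mem_iUnion, Finset.mem_range, Nat.lt_succ_iff]
      tauto
    rw [this]
    exact MeasurableSet.biUnion (Finset.range (T + 1)).countable_toSet fun k _ =>
      measurableSet_le measurable_const ((hM_adapted k).mono (ℱ.le k) le_rfl)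
  have hsv_nonneg : ∀ ω, 0 ≤ stoppedValue g τ ω := by
    intro ω
    have h1 : 0 ≤ c * ((T : ℝ) - τ' ω) := by
      apply mul_nonneg hc
      have := hittingBtwn_le (u := M) (s := Set.Ici (1 : ℝ)) (n := 0) (m := T) ω
      have : (τ' ω : ℝ) ≤ T := by exact_mod_cast this
      linarith
    have := hM_nonneg (τ' ω) ω
    show 0 ≤ M (τ' ω) ω + c * ((T : ℝ) - (τ' ω : ℝ))
    linarith
  have hsv_one : ∀ ω ∈ A, 1 ≤ stoppedValue g τ ω := by
    intro ω hω
    have hmem : ∃ j ∈ Set.Icc 0 T, M j ω ∈ Set.Ici (1 : ℝ) := by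
      obtain ⟨k, hk, hk1⟩ := hω
      exact ⟨k, ⟨Nat.zero_le _, hk⟩, hk1⟩
    have := stoppedValue_hittingBtwn_mem hmem
    have hM1 : 1 ≤ M (τ' ω) ω := this
    have h1 : 0 ≤ c * ((T : ℝ) - τ' ω) := by
      apply mul_nonneg hc
      have := hittingBtwn_le (u := M) (s := Set.Ici (1 : ℝ)) (n := 0) (m := T) ω
      have : (τ' ω : ℝ) ≤ T := by exact_mod_cast this
      linarith
    show 1 ≤ M (τ' ω) ω + c * ((T : ℝ) - (τ' ω : ℝ))
    linarith
  have hsv_int : Integrable (stoppedValue g τ) P :=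
    integrable_stoppedValue ℕ hτ_st hg_int hτ_le
  -- Markov: P(A) ≤ ∫ stoppedValue g τ
  have hmark : (P A).toReal ≤ ∫ ω, stoppedValue g τ ω ∂P := by
    calc (P A).toReal = ∫ ω in A, (1 : ℝ) ∂P := by simp; rfl
      _ ≤ ∫ ω in A, stoppedValue g τ ω ∂P := by
          refine setIntegral_mono_on (integrable_const _).integrableOn
            hsv_int.integrableOn hA_meas ?_
          intro ω hω; exact hsv_one ω hω
      _ ≤ ∫ ω, stoppedValue g τ ω ∂P :=
          setIntegral_le_integral hsv_int (Filter.Eventually.of_forall hsv_nonneg)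
  have hfinal : (P A).toReal ≤ γ + c * T := le_trans hmark (le_trans hos hg0)
  calc P A = ENNReal.ofReal ((P A).toReal) := (ENNReal.ofReal_toReal (measure_ne_top P A)).symm
    _ ≤ ENNReal.ofReal (γ + c * T) := ENNReal.ofReal_le_ofReal hfinal
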